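/- For all integers m, n ≥ 0, gcd(13^m − 356^n, 3·5·7·17) > 1; indeed 3 divides 13^m − 356^n when n ≡ 0 (mod 2), 7 divides it when m ≡ n (mod 2), 5 divides it when m ≡ 0 (mod 4), and 17 divides it when m ≡ 2 (mod 4) and n ≡ 1 (mod 2). -/

import Mathlib

private lemma d3 (m n : ℕ) (hn : 2 ∣ n) : (3 : ℤ) ∣ (13 : ℤ) ^ m - (356 : ℤ) ^ n := by
  obtain ⟨k, rfl⟩ := hn
  rw [show ((3:ℤ)) = ((3:ℕ):ℤ) by norm_num, ← ZMod.intCast_zmod_eq_zero_iff_dvd]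
  push_cast
  rw [pow_mul, show ((13 : ZMod 3)) = 1 by decide, show ((356 : ZMod 3))^2 = 1 by decide]
  simp

private lemma d7 (m n : ℕ) (h : m ≡ n [MOD 2]) : (7 : ℤ) ∣ (13 : ℤ) ^ m - (356 : ℤ) ^ n := by
  rw [show ((7:ℤ)) = ((7:ℕ):ℤ) by norm_num, ← ZMod.intCast_zmod_eq_zero_iff_dvd]
  push_cast
  rw [show ((13 : ZMod 7)) = -1 by decide, show ((356 : ZMod 7)) = -1 by decide,
    neg_one_pow_eq_pow_mod_two, neg_one_pow_eq_pow_mod_two (n := n), h, sub_self]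

private lemma d5 (m n : ℕ) (hm : 4 ∣ m) : (5 : ℤ) ∣ (13 : ℤ) ^ m - (356 : ℤ) ^ n := by
  obtain ⟨k, rfl⟩ := hm
  rw [show ((5:ℤ)) = ((5:ℕ):ℤ) by norm_num, ← ZMod.intCast_zmod_eq_zero_iff_dvd]
  push_cast
  rw [pow_mul, show ((13 : ZMod 5))^4 = 1 by decide, show ((356 : ZMod 5)) = 1 by decide]
  simp

private lemma d17 (m n : ℕ) (hm : m % 4 = 2) (hn : n % 2 = 1) :
    (17 : ℤ) ∣ (13 : ℤ) ^ m - (356 : ℤ) ^ n := by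
  obtain ⟨a, rfl⟩ : ∃ a, m = 4 * a + 2 := ⟨m / 4, by omega⟩
  obtain ⟨b, rfl⟩ : ∃ b, n = 2 * b + 1 := ⟨n / 2, by omega⟩
  rw [show ((17:ℤ)) = ((17:ℕ):ℤ) by norm_num, ← ZMod.intCast_zmod_eq_zero_iff_dvd]
  push_cast
  rw [pow_add, pow_add, pow_mul, pow_mul,
    show ((13 : ZMod 17))^4 = 1 by decide, show ((356 : ZMod 17))^2 = 1 by decide]
  simp [show ((13 : ZMod 17))^2 = -1 by decide, show ((356 : ZMod 17))^1 = -1 by decide]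

private lemma gcd_gt (x : ℤ) (d : ℕ) (hd : 1 < d) (h1 : (d : ℤ) ∣ x)
    (h2 : (d : ℤ) ∣ (3 * 5 * 7 * 17 : ℤ)) : 1 < Int.gcd x (3 * 5 * 7 * 17) := by
  have hg := Int.dvd_coe_gcd h1 h2
  rw [Int.natCast_dvd_natCast] at hg
  have hpos : 0 < Int.gcd x (3 * 5 * 7 * 17) := by
    rcases Nat.eq_zero_or_pos (Int.gcd x (3 * 5 * 7 * 17)) with h | h
    · rw [Int.gcd_eq_zero_iff] at h; norm_num at h
    · exact h
  exact lt_of_lt_of_le hd (Nat.le_of_dvd hpos hg)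

theorem covering_example_13_356 :
    ∀ m n : ℕ,
      1 < Int.gcd ((13 : ℤ) ^ m - (356 : ℤ) ^ n) (3 * 5 * 7 * 17) ∧
      (2 ∣ n → (3 : ℤ) ∣ (13 : ℤ) ^ m - (356 : ℤ) ^ n) ∧
      (m ≡ n [MOD 2] → (7 : ℤ) ∣ (13 : ℤ) ^ m - (356 : ℤ) ^ n) ∧
      (4 ∣ m → (5 : ℤ) ∣ (13 : ℤ) ^ m - (356 : ℤ) ^ n) ∧
      (m % 4 = 2 → n % 2 = 1 → (17 : ℤ) ∣ (13 : ℤ) ^ m - (356 : ℤ) ^ n) := by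
  intro m n
  refine ⟨?_, d3 m n, d7 m n, d5 m n, d17 m n⟩
  rcases Nat.even_or_odd n with hn | hn
  · exact gcd_gt _ 3 (by norm_num) (d3 m n hn.two_dvd) (by norm_num)
  · rcases Nat.even_or_odd m with hm | hm
    · rcases Nat.even_or_odd (m / 2) with hm2 | hm2
      · refine gcd_gt _ 5 (by norm_num) (d5 m n ?_) (by norm_num)
        obtain ⟨a, ha⟩ := hm; obtain ⟨b, hb⟩ := hm2; omega
      · refine gcd_gt _ 17 (by norm_num) (d17 m n ?_ ?_) (by norm_num)
        · obtain ⟨a, ha⟩ := hm; obtain ⟨b, hb⟩ := hm2; omega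
        · obtain ⟨c, hc⟩ := hn; omega
    · refine gcd_gt _ 7 (by norm_num) (d7 m n ?_) (by norm_num)
      obtain ⟨a, ha⟩ := hm; obtain ⟨b, hb⟩ := hn; unfold Nat.ModEq; omega
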